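/- arXiv:2303.17033 — 2 statements merged into one kernel-verified Lean document; each statement's English description precedes it below -/
import Mathlib

section
/- For a P-extendable i-centered incomplete game (N,K,v), every positive extension p can be written as p = m^v({i})·u_{{i}} + Σ_{S ∈ K^c} m^v(S∪{i})·[β_S·u_S + (1−β_S)·u_{S∪{i}}] for some coefficients β_S ∈ [0,1], and conversely every such game is a positive extension. -/
open Finset

/-- Möbius transform of a (complete) cooperative game `w : 2^N → ℝ`. -/
noncomputable def mobius {α : Type*} [DecidableEq α] (w : Finset α → ℝ) (T : Finset α) : ℝ :=
  ∑ S ∈ T.powerset, (-1 : ℝ) ^ (T.card - S.card) * w S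

/-- Möbius transform of an `i`-centered incomplete game `v`, defined for `S ∈ K`,
where `K = {S : i ∈ S} ∪ {∅}`: `m^v(S) = Σ_{T ⊆ S, T ∈ K} (-1)^{|S \ T|} v(T)`. -/
noncomputable def mobiusK {α : Type*} [DecidableEq α] (i : α) (v : Finset α → ℝ)
    (S : Finset α) : ℝ :=
  ∑ T ∈ S.powerset.filter (fun T => i ∈ T ∨ T = ∅), (-1 : ℝ) ^ ((S \ T).card) * v T

/-- The unanimity game `u_T`. -/
noncomputable def unanimity {α : Type*} [DecidableEq α] (T S : Finset α) : ℝ :=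
  if T ⊆ S then 1 else 0

section Aux

variable {α : Type*} [DecidableEq α]

lemma sum_pow_real (A : Finset α) :
    ∑ U ∈ A.powerset, (-1 : ℝ) ^ U.card = if A = ∅ then 1 else 0 := by
  have := @Finset.sum_powerset_neg_one_pow_card α _ A
  have h : ((∑ m ∈ A.powerset, (-1 : ℤ) ^ m.card : ℤ) : ℝ)
      = ∑ U ∈ A.powerset, (-1 : ℝ) ^ U.card := by push_cast; ring
  rw [← h, this]
  split <;> norm_num

lemma master {R S : Finset α} (h : R ⊆ S) :
    ∑ T ∈ S.powerset.filter (fun T => R ⊆ T), (-1 : ℝ) ^ T.card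
      = if R = S then (-1 : ℝ) ^ R.card else 0 := by
  have : ∑ T ∈ S.powerset.filter (fun T => R ⊆ T), (-1 : ℝ) ^ T.card
      = ∑ U ∈ (S \ R).powerset, (-1 : ℝ) ^ R.card * (-1 : ℝ) ^ U.card := by
    refine Finset.sum_nbij' (fun T => T \ R) (fun U => U ∪ R) ?_ ?_ ?_ ?_ ?_
    · intro T hT
      simp only [mem_filter, mem_powerset] at hT ⊢
      exact sdiff_subset_sdiff hT.1 (le_refl R)
    · intro U hU
      simp only [mem_powerset] at hU
      simp only [mem_filter, mem_powerset]
      exact ⟨union_subset (hU.trans sdiff_subset) h, subset_union_right⟩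
    · intro T hT
      simp only [mem_filter, mem_powerset] at hT
      exact sdiff_union_of_subset hT.2
    · intro U hU
      simp only [mem_powerset] at hU
      exact union_sdiff_cancel_right (disjoint_of_subset_left hU sdiff_disjoint)
    · intro T hT
      simp only [mem_filter, mem_powerset] at hT
      rw [← pow_add]
      congr 1
      rw [← card_sdiff_add_card_eq_card hT.2]
      ring
  rw [this, ← mul_sum, sum_pow_real]
  by_cases hRS : R = S
  · subst hRS; simp
  · have h2 : S \ R ≠ ∅ := by
      rw [Ne, sdiff_eq_empty_iff_subset]
      exact fun hc => hRS (subset_antisymm h hc)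
    simp [hRS, h2]

lemma neg_one_pow_sub {a b : ℕ} (h : b ≤ a) :
    (-1 : ℝ) ^ (a - b) = (-1 : ℝ) ^ a * (-1 : ℝ) ^ b := by
  have h2 : a - b + 2 * b = a + b := by omega
  have : (-1 : ℝ) ^ (a + b) = (-1 : ℝ) ^ (a - b) := by
    rw [← h2, pow_add, pow_mul]
    norm_num
  rw [← this, pow_add]

lemma interval_lo {R S : Finset α} (h : R ⊆ S) :
    ∑ T ∈ S.powerset.filter (fun T => R ⊆ T), (-1 : ℝ) ^ (T.card - R.card)
      = if R = S then 1 else 0 := by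
  have : ∀ T ∈ S.powerset.filter (fun T => R ⊆ T),
      (-1 : ℝ) ^ (T.card - R.card) = (-1 : ℝ) ^ T.card * (-1 : ℝ) ^ R.card := by
    intro T hT
    simp only [mem_filter, mem_powerset] at hT
    exact neg_one_pow_sub (card_le_card hT.2)
  rw [sum_congr rfl this, ← sum_mul, master h]
  by_cases hRS : R = S
  · subst hRS; simp [← pow_add, ← two_mul, pow_mul]
  · simp [hRS]

lemma interval_hi {T S : Finset α} (h : T ⊆ S) :
    ∑ R ∈ S.powerset.filter (fun R => T ⊆ R), (-1 : ℝ) ^ (S.card - R.card)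
      = if T = S then 1 else 0 := by
  have : ∀ R ∈ S.powerset.filter (fun R => T ⊆ R),
      (-1 : ℝ) ^ (S.card - R.card) = (-1 : ℝ) ^ S.card * (-1 : ℝ) ^ R.card := by
    intro R hR
    simp only [mem_filter, mem_powerset] at hR
    exact neg_one_pow_sub (card_le_card hR.1)
  rw [sum_congr rfl this, ← mul_sum, master h]
  by_cases hTS : T = S
  · subst hTS; simp [← pow_add, ← two_mul, pow_mul]
  · simp [hTS]

lemma inversion (w : Finset α → ℝ) (S : Finset α) :
    ∑ T ∈ S.powerset, mobius w T = w S := by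
  have key : ∀ T ∈ S.powerset, mobius w T
      = ∑ R ∈ S.powerset, (if R ⊆ T then (-1 : ℝ) ^ (T.card - R.card) * w R else 0) := by
    intro T hT
    simp only [mem_powerset] at hT
    rw [mobius, ← sum_filter]
    apply Finset.sum_congr
    · ext R
      simp only [mem_filter, mem_powerset]
      exact ⟨fun hR => ⟨hR.trans hT, hR⟩, fun hR => hR.2⟩
    · intros; rfl
  rw [sum_congr rfl key, Finset.sum_comm]
  have key2 : ∀ R ∈ S.powerset,
      (∑ T ∈ S.powerset, if R ⊆ T then (-1 : ℝ) ^ (T.card - R.card) * w R else 0)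
        = (if R = S then 1 else 0) * w R := by
    intro R hR
    simp only [mem_powerset] at hR
    rw [← sum_filter, ← sum_mul, interval_lo hR]
  rw [sum_congr rfl key2]
  simp only [ite_mul, one_mul, zero_mul]
  rw [Finset.sum_ite_eq' S.powerset S w]
  simp

lemma inversionK (i : α) (w : Finset α → ℝ) (hw : w ∅ = 0) {S : Finset α} (hiS : i ∈ S) :
    ∑ T ∈ S.powerset.filter (fun T => i ∈ T ∨ T = ∅), mobiusK i w T = w S := by
  have key : ∀ T ∈ S.powerset.filter (fun T => i ∈ T ∨ T = ∅), mobiusK i w T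
      = ∑ R ∈ S.powerset.filter (fun R => i ∈ R ∨ R = ∅),
          (if R ⊆ T then (-1 : ℝ) ^ (T.card - R.card) * w R else 0) := by
    intro T hT
    simp only [mem_filter, mem_powerset] at hT
    rw [mobiusK, ← sum_filter]
    apply Finset.sum_congr
    · ext R
      simp only [mem_filter, mem_powerset]
      constructor
      · rintro ⟨hRT, hK⟩; exact ⟨⟨hRT.trans hT.1, hK⟩, hRT⟩
      · rintro ⟨⟨_, hK⟩, hRT⟩; exact ⟨hRT, hK⟩
    · intro R hR
      simp only [mem_filter, mem_powerset] at hR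
      rw [card_sdiff_of_subset hR.2]
  rw [sum_congr rfl key, Finset.sum_comm]
  have key2 : ∀ R ∈ S.powerset.filter (fun R => i ∈ R ∨ R = ∅),
      (∑ T ∈ S.powerset.filter (fun T => i ∈ T ∨ T = ∅),
          if R ⊆ T then (-1 : ℝ) ^ (T.card - R.card) * w R else 0)
        = (if R = S then 1 else 0) * w R := by
    intro R hR
    simp only [mem_filter, mem_powerset] at hR
    rcases hR.2 with hiR | rfl
    · rw [← sum_filter]
      have hset : (S.powerset.filter (fun T => i ∈ T ∨ T = ∅)).filter (fun T => R ⊆ T)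
          = S.powerset.filter (fun T => R ⊆ T) := by
        ext T
        simp only [mem_filter, mem_powerset]
        constructor
        · rintro ⟨⟨h1, _⟩, h2⟩; exact ⟨h1, h2⟩
        · rintro ⟨h1, h2⟩; exact ⟨⟨h1, Or.inl (h2 hiR)⟩, h2⟩
      rw [hset, ← sum_mul, interval_lo hR.1]
    · simp [hw]
  rw [sum_congr rfl key2]
  simp only [ite_mul, one_mul, zero_mul]
  rw [Finset.sum_ite_eq' _ S w]
  simp [hiS]

lemma mobius_congr {p q : Finset α → ℝ} (h : ∀ S, p S = q S) (T : Finset α) :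
    mobius p T = mobius q T :=
  Finset.sum_congr rfl fun R _ => by rw [h R]

lemma mobius_empty (p : Finset α → ℝ) : mobius p ∅ = p ∅ := by simp [mobius]

lemma mobius_unanimity (T S : Finset α) :
    mobius (unanimity T) S = if S = T then 1 else 0 := by
  rw [mobius]
  simp only [unanimity, mul_ite, mul_one, mul_zero]
  rw [← sum_filter]
  by_cases h : T ⊆ S
  · rw [interval_hi h]
    by_cases h2 : T = S <;> simp [h2, eq_comm]
  · have he : S.powerset.filter (fun R => T ⊆ R) = ∅ := by
      ext R
      simp only [mem_filter, mem_powerset, notMem_empty, iff_false, not_and]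
      exact fun hRS hTR => h (hTR.trans hRS)
    rw [he]
    have : S ≠ T := fun hST => h (hST ▸ le_refl S)
    simp [this]

lemma mobius_add (w1 w2 : Finset α → ℝ) (T : Finset α) :
    mobius (fun S => w1 S + w2 S) T = mobius w1 T + mobius w2 T := by
  simp [mobius, mul_add, sum_add_distrib]

lemma mobius_smul (c : ℝ) (w : Finset α → ℝ) (T : Finset α) :
    mobius (fun S => c * w S) T = c * mobius w T := by
  rw [mobius, mobius, mul_sum]
  exact Finset.sum_congr rfl fun R _ => by ring

lemma mobius_sum {ι : Type*} (A : Finset ι) (f : ι → Finset α → ℝ) (T : Finset α) :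
    mobius (fun S => ∑ U ∈ A, f U S) T = ∑ U ∈ A, mobius (f U) T := by
  simp only [mobius, mul_sum]
  exact Finset.sum_comm

lemma mobius_comb (a b : ℝ) (U V T : Finset α) :
    mobius (fun S => a * unanimity U S + b * unanimity V S) T
      = a * (if T = U then 1 else 0) + b * (if T = V then 1 else 0) := by
  rw [mobius_add, mobius_smul, mobius_smul, mobius_unanimity, mobius_unanimity]

lemma regroup [Fintype α] (i : α) (g : Finset α → ℝ) (hg : g ∅ = 0) :
    ∑ T ∈ (univ : Finset α).powerset, g T
      = g {i} + ∑ T ∈ (univ : Finset α).powerset.filter (fun T => i ∉ T ∧ T ≠ ∅),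
          (g T + g (insert i T)) := by
  rw [← sum_filter_add_sum_filter_not (univ : Finset α).powerset (fun T => i ∉ T)]
  have h1 : ∑ T ∈ (univ : Finset α).powerset.filter (fun T => ¬ i ∉ T), g T
      = ∑ T ∈ (univ : Finset α).powerset.filter (fun T => i ∉ T), g (insert i T) := by
    refine Finset.sum_nbij' (fun T => T.erase i) (fun T => insert i T) ?_ ?_ ?_ ?_ ?_
    · intro T hT
      simp only [mem_filter, mem_powerset, not_not] at hT ⊢
      exact ⟨subset_univ _, notMem_erase i T⟩
    · intro T hT
      simp only [mem_filter, mem_powerset, not_not]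
      exact ⟨subset_univ _, mem_insert_self i T⟩
    · intro T hT
      simp only [mem_filter, mem_powerset, not_not] at hT
      exact insert_erase hT.2
    · intro T hT
      simp only [mem_filter, mem_powerset] at hT
      exact erase_insert hT.2
    · intro T hT
      simp only [mem_filter, mem_powerset, not_not] at hT
      rw [insert_erase hT.2]
  rw [h1]
  have hmem : ∅ ∈ (univ : Finset α).powerset.filter (fun T => i ∉ T) := by simp
  have h2 : (univ : Finset α).powerset.filter (fun T => i ∉ T ∧ T ≠ ∅)
      = ((univ : Finset α).powerset.filter (fun T => i ∉ T)).erase ∅ := by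
    ext T
    simp only [mem_filter, mem_powerset, mem_erase]
    tauto
  rw [h2, sum_add_distrib]
  rw [← Finset.add_sum_erase _ g hmem, ← Finset.add_sum_erase _ (fun T => g (insert i T)) hmem]
  simp only [hg, insert_empty_eq]
  ring

lemma mobiusK_congr {i : α} {p v : Finset α → ℝ}
    (h : ∀ S : Finset α, (i ∈ S ∨ S = ∅) → p S = v S) (S : Finset α) :
    mobiusK i p S = mobiusK i v S := by
  refine Finset.sum_congr rfl fun T hT => ?_
  simp only [mem_filter, mem_powerset] at hT
  rw [h T hT.2]

lemma mobiusK_empty (i : α) (v : Finset α → ℝ) : mobiusK i v ∅ = v ∅ := by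
  rw [mobiusK, powerset_empty, filter_singleton]
  simp

lemma mobiusK_eq (i : α) (p : Finset α → ℝ) (hp0 : p ∅ = 0) {S : Finset α} (hiS : i ∈ S) :
    mobiusK i p S = mobius p S + mobius p (S.erase i) := by
  have h1 : mobiusK i p S
      = ∑ R ∈ S.powerset.filter (fun R => i ∈ R), (-1 : ℝ) ^ (S.card - R.card) * p R := by
    rw [mobiusK]
    have hset : S.powerset.filter (fun T => i ∈ T ∨ T = ∅)
        = insert ∅ (S.powerset.filter (fun T => i ∈ T)) := by
      ext T
      simp only [mem_insert, mem_filter, mem_powerset]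
      constructor
      · rintro ⟨hTS, hi | rfl⟩
        · exact Or.inr ⟨hTS, hi⟩
        · exact Or.inl rfl
      · rintro (rfl | ⟨hTS, hi⟩)
        · exact ⟨empty_subset S, Or.inr rfl⟩
        · exact ⟨hTS, Or.inl hi⟩
    rw [hset, sum_insert (by simp)]
    rw [hp0, mul_zero, zero_add]
    refine Finset.sum_congr rfl fun R hR => ?_
    simp only [mem_filter, mem_powerset] at hR
    rw [card_sdiff_of_subset hR.1]
  have h2 : mobius p S
      = (∑ R ∈ S.powerset.filter (fun R => i ∈ R), (-1 : ℝ) ^ (S.card - R.card) * p R)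
        + ∑ R ∈ S.powerset.filter (fun R => ¬ i ∈ R), (-1 : ℝ) ^ (S.card - R.card) * p R :=
    (sum_filter_add_sum_filter_not _ _ _).symm
  have h3 : ∑ R ∈ S.powerset.filter (fun R => ¬ i ∈ R), (-1 : ℝ) ^ (S.card - R.card) * p R
      = - mobius p (S.erase i) := by
    have hset : S.powerset.filter (fun R => ¬ i ∈ R) = (S.erase i).powerset := by
      ext R
      simp only [mem_filter, mem_powerset, subset_erase]
    rw [hset, mobius, ← Finset.sum_neg_distrib]
    refine Finset.sum_congr rfl fun R hR => ?_
    simp only [mem_powerset] at hR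
    have hc : S.card - R.card = ((S.erase i).card - R.card) + 1 := by
      have he := card_erase_of_mem hiS
      have hRe : R.card ≤ (S.erase i).card := card_le_card hR
      have hpos : 0 < S.card := card_pos.mpr ⟨i, hiS⟩
      omega
    rw [hc, pow_succ]
    ring
  linarith [h1, h2, h3]

lemma rep [Fintype α] (p : Finset α → ℝ) (S : Finset α) :
    p S = ∑ T ∈ (univ : Finset α).powerset, mobius p T * unanimity T S := by
  have h : ∑ T ∈ (univ : Finset α).powerset, mobius p T * unanimity T S
      = ∑ T ∈ S.powerset, mobius p T := by
    simp only [unanimity, mul_ite, mul_one, mul_zero]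
    rw [← sum_filter]
    apply Finset.sum_congr
    · ext T
      simp only [mem_filter, mem_powerset]
      exact ⟨fun hT => hT.2, fun hT => ⟨subset_univ _, hT⟩⟩
    · intros; rfl
  rw [h, inversion]

end Aux

/-- For a P-extendable `i`-centered incomplete game `(N,K,v)`, a game `p` is a positive
extension iff `p = m^v({i})·u_{{i}} + Σ_{S ∈ K^c} m^v(S∪{i})·[β_S·u_S + (1-β_S)·u_{S∪{i}}]`
for some coefficients `β_S ∈ [0,1]`. -/
theorem stmt3 {α : Type*} [Fintype α] [DecidableEq α] (i : α) (v : Finset α → ℝ)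
    (hv : v ∅ = 0) (hpos : ∀ S : Finset α, (i ∈ S ∨ S = ∅) → 0 ≤ mobiusK i v S)
    (p : Finset α → ℝ) :
    (p ∅ = 0 ∧ (∀ T : Finset α, 0 ≤ mobius p T) ∧
        (∀ S : Finset α, (i ∈ S ∨ S = ∅) → p S = v S)) ↔
      (∃ β : Finset α → ℝ, (∀ S : Finset α, i ∉ S → S ≠ ∅ → β S ∈ Set.Icc (0 : ℝ) 1) ∧
        ∀ S : Finset α,
          p S = mobiusK i v {i} * unanimity {i} S +
            ∑ T ∈ (Finset.univ : Finset α).powerset.filter (fun T => i ∉ T ∧ T ≠ ∅),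
              mobiusK i v (insert i T) *
                (β T * unanimity T S + (1 - β T) * unanimity (insert i T) S)) := by
  classical
  constructor
  · rintro ⟨hp0, hmp, hagr⟩
    have hK : ∀ T : Finset α, i ∉ T →
        mobiusK i v (insert i T) = mobius p T + mobius p (insert i T) := by
      intro T hiT
      rw [← mobiusK_congr hagr, mobiusK_eq i p hp0 (mem_insert_self i T), erase_insert hiT]
      ring
    have hKi : mobiusK i v {i} = mobius p {i} := by
      rw [← mobiusK_congr hagr, mobiusK_eq i p hp0 (mem_singleton_self i)]
      simp [erase_singleton, mobius_empty, hp0]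
    refine ⟨fun T => if mobiusK i v (insert i T) = 0 then 0
      else mobius p T / mobiusK i v (insert i T), ?_, ?_⟩
    · intro T hiT hTne
      by_cases h : mobiusK i v (insert i T) = 0
      · simp only [h, if_pos, Set.mem_Icc]
        norm_num
      · have hpos' : 0 < mobiusK i v (insert i T) :=
          lt_of_le_of_ne (hpos _ (Or.inl (mem_insert_self i T))) (Ne.symm h)
        simp only [h, if_false, Set.mem_Icc]
        constructor
        · exact div_nonneg (hmp T) hpos'.le
        · rw [div_le_one hpos']
          have := hK T hiT
          linarith [hmp (insert i T)]
    · intro S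
      have hb1 : ∀ T : Finset α, i ∉ T →
          mobiusK i v (insert i T) * (if mobiusK i v (insert i T) = 0 then 0
            else mobius p T / mobiusK i v (insert i T)) = mobius p T := by
        intro T hiT
        by_cases h : mobiusK i v (insert i T) = 0
        · rw [if_pos h, mul_zero]
          have h1 := hmp T
          have h2 := hmp (insert i T)
          have h3 := hK T hiT
          linarith
        · rw [if_neg h, mul_div_cancel₀ _ h]
      have hb2 : ∀ T : Finset α, i ∉ T →
          mobiusK i v (insert i T) * (1 - (if mobiusK i v (insert i T) = 0 then 0
            else mobius p T / mobiusK i v (insert i T))) = mobius p (insert i T) := by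
        intro T hiT
        rw [mul_sub, mul_one, hb1 T hiT, hK T hiT]
        ring
      have hrep := rep p S
      have hreg := regroup i (fun T => mobius p T * unanimity T S)
        (by show mobius p ∅ * unanimity ∅ S = 0; rw [mobius_empty, hp0, zero_mul])
      rw [hrep, hreg, hKi]
      congr 1
      refine Finset.sum_congr rfl fun T hT => ?_
      simp only [mem_filter, mem_powerset] at hT
      rw [mul_add, ← mul_assoc, ← mul_assoc, hb1 T hT.2.1, hb2 T hT.2.1]
  · rintro ⟨β, hβ, hform⟩
    have hA : ∀ T : Finset α,
        T ∈ (univ : Finset α).powerset.filter (fun T => i ∉ T ∧ T ≠ ∅) → i ∉ T ∧ T ≠ ∅ :=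
      fun T hT => (mem_filter.mp hT).2
    have hp0 : p ∅ = 0 := by
      rw [hform ∅]
      have h1 : unanimity {i} (∅ : Finset α) = 0 := by
        simp [unanimity]
      rw [h1, mul_zero, zero_add]
      refine Finset.sum_eq_zero fun T hT => ?_
      obtain ⟨hiT, hTne⟩ := hA T hT
      have hu1 : unanimity T (∅ : Finset α) = 0 := by
        simp [unanimity, subset_empty, hTne]
      have hu2 : unanimity (insert i T) (∅ : Finset α) = 0 := by
        simp [unanimity, subset_empty]
      rw [hu1, hu2]
      ring
    refine ⟨hp0, ?_, ?_⟩
    · intro T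
      have hmob : mobius p T = mobiusK i v {i} * (if T = {i} then 1 else 0)
          + ∑ U ∈ (univ : Finset α).powerset.filter (fun T => i ∉ T ∧ T ≠ ∅),
              mobiusK i v (insert i U) * (β U * (if T = U then 1 else 0)
                + (1 - β U) * (if T = insert i U then 1 else 0)) := by
        rw [mobius_congr hform T,
          mobius_add (fun S => mobiusK i v {i} * unanimity {i} S)
            (fun S => ∑ U ∈ (univ : Finset α).powerset.filter (fun T => i ∉ T ∧ T ≠ ∅),
              mobiusK i v (insert i U) *
                (β U * unanimity U S + (1 - β U) * unanimity (insert i U) S)),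
          mobius_smul, mobius_unanimity, mobius_sum]
        congr 1
        refine Finset.sum_congr rfl fun U hU => ?_
        have heq : ∀ S : Finset α,
            mobiusK i v (insert i U) *
              (β U * unanimity U S + (1 - β U) * unanimity (insert i U) S)
            = (mobiusK i v (insert i U) * β U) * unanimity U S
              + (mobiusK i v (insert i U) * (1 - β U)) * unanimity (insert i U) S := by
          intro S; ring
        rw [mobius_congr heq T, mobius_comb]
        ring
      rw [hmob]
      have ind_nonneg : ∀ (A B : Finset α), (0 : ℝ) ≤ if A = B then 1 else 0 := by
        intro A B; split_ifs <;> norm_num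
      apply add_nonneg
      · exact mul_nonneg (hpos _ (Or.inl (mem_singleton_self i))) (ind_nonneg _ _)
      · refine Finset.sum_nonneg fun U hU => ?_
        obtain ⟨hiU, hUne⟩ := hA U hU
        obtain ⟨hβ0, hβ1⟩ := hβ U hiU hUne
        refine mul_nonneg (hpos _ (Or.inl (mem_insert_self i U))) ?_
        exact add_nonneg (mul_nonneg hβ0 (ind_nonneg _ _))
          (mul_nonneg (by linarith) (ind_nonneg _ _))
    · intro S hS
      rcases hS with hiS | rfl
      · rw [hform S]
        have hu : unanimity {i} S = 1 := by
          simp [unanimity, singleton_subset_iff, hiS]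
        rw [hu, mul_one]
        have hterm : ∀ T ∈ (univ : Finset α).powerset.filter (fun T => i ∉ T ∧ T ≠ ∅),
            mobiusK i v (insert i T) *
              (β T * unanimity T S + (1 - β T) * unanimity (insert i T) S)
            = if T ⊆ S then mobiusK i v (insert i T) else 0 := by
          intro T hT
          by_cases h : T ⊆ S
          · have h2 : insert i T ⊆ S := insert_subset hiS h
            simp only [unanimity, if_pos h, if_pos h2]
            ring
          · have h2 : ¬ insert i T ⊆ S := fun hc => h ((subset_insert i T).trans hc)
            simp only [unanimity, if_neg h, if_neg h2]
            ring
        rw [sum_congr rfl hterm, ← sum_filter]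
        -- p S = mobiusK i v {i} + ∑_{T ⊆ S, i ∉ T, T ≠ ∅} mobiusK i v (insert i T) = v S
        have hbij : ∑ T ∈ ((univ : Finset α).powerset.filter
              (fun T => i ∉ T ∧ T ≠ ∅)).filter (fun T => T ⊆ S),
              mobiusK i v (insert i T)
            = ∑ T ∈ S.powerset.filter (fun T => i ∈ T ∧ T ≠ {i}), mobiusK i v T := by
          refine Finset.sum_nbij' (fun T => insert i T) (fun T => T.erase i) ?_ ?_ ?_ ?_ ?_
          · intro T hT
            simp only [mem_filter, mem_powerset] at hT ⊢
            obtain ⟨⟨_, hiT, hTne⟩, hTS⟩ := hT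
            refine ⟨insert_subset hiS hTS, mem_insert_self i T, ?_⟩
            intro hc
            apply hTne
            have : T ⊆ {i} := by rw [← hc]; exact subset_insert i T
            rcases Finset.subset_singleton_iff.mp this with rfl | rfl
            · rfl
            · exact absurd (mem_singleton_self i) hiT
          · intro T hT
            simp only [mem_filter, mem_powerset] at hT ⊢
            obtain ⟨hTS, hiT, hTne⟩ := hT
            refine ⟨⟨subset_univ _, notMem_erase i T, ?_⟩, (erase_subset i T).trans hTS⟩
            intro hc
            apply hTne
            have := insert_erase hiT
            rw [hc] at this
            simp at this
            exact this.symm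
          · intro T hT
            simp only [mem_filter, mem_powerset] at hT
            exact erase_insert hT.1.2.1
          · intro T hT
            simp only [mem_filter, mem_powerset] at hT
            exact insert_erase hT.2.1
          · intros; rfl
        rw [hbij]
        have hinv := inversionK i v hv hiS
        have hsetK : S.powerset.filter (fun T => i ∈ T ∨ T = ∅)
            = insert ∅ (insert {i} (S.powerset.filter (fun T => i ∈ T ∧ T ≠ {i}))) := by
          ext T
          simp only [mem_insert, mem_filter, mem_powerset]
          constructor
          · rintro ⟨hTS, hi | rfl⟩
            · by_cases hT : T = {i}
              · exact Or.inr (Or.inl hT)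
              · exact Or.inr (Or.inr ⟨hTS, hi, hT⟩)
            · exact Or.inl rfl
          · rintro (rfl | rfl | ⟨hTS, hi, _⟩)
            · exact ⟨empty_subset S, Or.inr rfl⟩
            · exact ⟨singleton_subset_iff.mpr hiS, Or.inl (mem_singleton_self i)⟩
            · exact ⟨hTS, Or.inl hi⟩
        rw [hsetK, sum_insert (by simp [(Finset.singleton_ne_empty i).symm]), sum_insert (by simp)] at hinv
        rw [mobiusK_empty, hv] at hinv
        linarith [hinv]
      · rw [hp0, hv]
end

section
/- For every positive extension w of a P-extendable i-centered incomplete game (N,K,v) and every S ∈ K^c, it holds that 0 ≤ w(S) ≤ v(S∪{i}); i.e., v₁(S) ≤ w(S) ≤ v₀(S). -/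
open Finset

lemma mobius_inversion {α : Type*} [DecidableEq α] (w : Finset α → ℝ) (T : Finset α) :
    ∑ S ∈ T.powerset, mobius w S = w T := by
  unfold mobius
  rw [Finset.sum_comm' (t' := T.powerset) (s' := fun R => T.powerset.filter (fun S => R ⊆ S))
    (by intro S R
        simp only [mem_powerset, mem_filter]
        constructor
        · rintro ⟨h1, h2⟩; exact ⟨⟨h1, h2⟩, h2.trans h1⟩
        · rintro ⟨⟨h1, h2⟩, _⟩; exact ⟨h1, h2⟩)]
  have key : ∀ R ∈ T.powerset,
      (∑ S ∈ T.powerset.filter (fun S => R ⊆ S), (-1 : ℝ) ^ (S.card - R.card) * w R)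
      = (if R = T then 1 else 0) * w R := by
    intro R hR
    rw [mem_powerset] at hR
    rw [← Finset.sum_mul]
    congr 1
    -- reindex S = R ∪ U, U ⊆ T \ R
    rw [show T.powerset.filter (fun S => R ⊆ S)
        = (T \ R).powerset.image (fun U => R ∪ U) from ?_]
    · rw [Finset.sum_image ?_]
      · have : ∀ U ∈ (T \ R).powerset, (-1 : ℝ) ^ ((R ∪ U).card - R.card) = (-1 : ℝ) ^ U.card := by
          intro U hU
          rw [mem_powerset] at hU
          have hdisj : Disjoint R U := by
            refine Finset.disjoint_left.2 fun a ha ha' => ?_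
            exact (Finset.mem_sdiff.1 (hU ha')).2 ha
          rw [Finset.card_union_of_disjoint hdisj]
          simp
        rw [Finset.sum_congr rfl this]
        have := @Finset.sum_powerset_neg_one_pow_card α _ (T \ R)
        have h2 : (∑ m ∈ (T \ R).powerset, ((-1 : ℝ)) ^ m.card)
            = ((∑ m ∈ (T \ R).powerset, ((-1 : ℤ)) ^ m.card : ℤ) : ℝ) := by push_cast; rfl
        rw [h2, this]
        by_cases h : R = T
        · simp [h]
        · have : T \ R ≠ ∅ := by
            intro he
            exact h (Finset.Subset.antisymm hR (by
              intro x hx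
              by_contra hxR
              exact absurd (Finset.mem_sdiff.2 ⟨hx, hxR⟩) (by simp [he])))
          simp [h, this]
      · intro U hU U' hU' hEq
        rw [Finset.mem_coe, mem_powerset] at hU hU'; beta_reduce at hEq
        apply Finset.Subset.antisymm <;> intro a ha
        · have : a ∈ R ∪ U' := hEq ▸ Finset.mem_union_right _ ha
          rcases Finset.mem_union.1 this with h | h
          · exact absurd h (Finset.mem_sdiff.1 (hU ha)).2
          · exact h
        · have : a ∈ R ∪ U := hEq ▸ Finset.mem_union_right _ ha
          rcases Finset.mem_union.1 this with h | h
          · exact absurd h (Finset.mem_sdiff.1 (hU' ha)).2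
          · exact h
    · ext S
      simp only [mem_filter, mem_powerset, mem_image]
      constructor
      · rintro ⟨hST, hRS⟩
        exact ⟨S \ R, fun a ha => Finset.mem_sdiff.2 ⟨hST (Finset.mem_sdiff.1 ha).1,
          (Finset.mem_sdiff.1 ha).2⟩, Finset.union_sdiff_of_subset hRS⟩
      · rintro ⟨U, hU, rfl⟩
        exact ⟨Finset.union_subset hR (fun a ha => (Finset.mem_sdiff.1 (hU ha)).1),
          Finset.subset_union_left⟩
  rw [Finset.sum_congr rfl key]
  simp [Finset.sum_ite_eq']

/-- Every positive extension `w` of a P-extendable `i`-centered incomplete game satisfies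
`0 ≤ w(S) ≤ v(S ∪ {i})` for every `S ∈ K^c`, i.e. `v₁(S) ≤ w(S) ≤ v₀(S)`. -/
theorem stmt16 {α : Type*} [Fintype α] [DecidableEq α] (i : α) (v w : Finset α → ℝ)
    (hv : v ∅ = 0) (hpos : ∀ S : Finset α, (i ∈ S ∨ S = ∅) → 0 ≤ mobiusK i v S)
    (hw0 : w ∅ = 0) (hwpos : ∀ T : Finset α, 0 ≤ mobius w T)
    (hext : ∀ S : Finset α, (i ∈ S ∨ S = ∅) → w S = v S) :
    ∀ S : Finset α, i ∉ S → S ≠ ∅ → 0 ≤ w S ∧ w S ≤ v (insert i S) := by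
  intro S hiS hSne
  have hwS := mobius_inversion w S
  have hwT := mobius_inversion w (insert i S)
  constructor
  · rw [← hwS]
    exact Finset.sum_nonneg fun T _ => hwpos T
  · have hsub : S.powerset ⊆ (insert i S).powerset := by
      intro T hT
      rw [mem_powerset] at *
      exact hT.trans (Finset.subset_insert _ _)
    calc w S = ∑ T ∈ S.powerset, mobius w T := hwS.symm
      _ ≤ ∑ T ∈ (insert i S).powerset, mobius w T :=
          Finset.sum_le_sum_of_subset_of_nonneg hsub (fun T _ _ => hwpos T)
      _ = w (insert i S) := hwT
      _ = v (insert i S) := hext _ (Or.inl (Finset.mem_insert_self _ _))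
end
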